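/- (Closed form of the operator symbol L under symplecticity.) Let c₁ ∈ ℝ, and let ν ∈ ℝ satisfy sin ν ≠ 0 and cos((1−c₁)ν) ≠ 0. Set b₁ = cos((1−c₁)ν) and b̄₁ = (1−c₁)·sinc((1−c₁)ν) (the symplecticity coefficients with d₁* = 1, evaluated at ν). For z ∈ ℂ such that all denominators below are nonzero, define L₁(z) = (e^z − cos ν − ν²·sinc(ν)·(b̄₁/b₁)) / ((b̄₁/b₁)(e^z − cos ν) + sinc(ν)), L₂(z) = cos(c₁ν) + c₁·sinc(c₁ν)·L₁(z), and L(z) = (e^z − cos ν − sinc(ν)·L₁(z)) / (b̄₁·L₂(z)). Then L(z) = −2ν·(cos ν − cosh z)/sin ν. -/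

import Mathlib

noncomputable section

/-- The (unnormalized) sinc function: `sinc x = sin x / x` for `x ≠ 0`, `sinc 0 = 1`. -/
def rsinc (x : ℝ) : ℝ := if x = 0 then 1 else Real.sin x / x

/-- `b₁` evaluated at `ν` under the symplecticity condition with `d₁* = 1`. -/
def b1c (c₁ ν : ℝ) : ℝ := Real.cos ((1 - c₁) * ν)

/-- `b̄₁` evaluated at `ν` under the symplecticity condition with `d₁* = 1`. -/
def bbc (c₁ ν : ℝ) : ℝ := (1 - c₁) * rsinc ((1 - c₁) * ν)

/-- The operator symbol `L₁(z)`. -/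
def L₁sym (c₁ ν : ℝ) (z : ℂ) : ℂ :=
  (Complex.exp z - (Real.cos ν : ℂ) - ((ν : ℂ) ^ 2) * (rsinc ν : ℂ) * ((bbc c₁ ν / b1c c₁ ν : ℝ) : ℂ))
    / (((bbc c₁ ν / b1c c₁ ν : ℝ) : ℂ) * (Complex.exp z - (Real.cos ν : ℂ)) + (rsinc ν : ℂ))

/-- The operator symbol `L₂(z)`. -/
def L₂sym (c₁ ν : ℝ) (z : ℂ) : ℂ :=
  ((Real.cos (c₁ * ν) : ℝ) : ℂ) + ((c₁ * rsinc (c₁ * ν) : ℝ) : ℂ) * L₁sym c₁ ν z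

/-- The operator symbol `L(z)`. -/
def Lsym (c₁ ν : ℝ) (z : ℂ) : ℂ :=
  (Complex.exp z - (Real.cos ν : ℂ) - (rsinc ν : ℂ) * L₁sym c₁ ν z)
    / (((bbc c₁ ν : ℝ) : ℂ) * L₂sym c₁ ν z)

/-- Closed form of the operator symbol `L` under the symplecticity
condition with `d₁* = 1`: `L(z) = −2ν(cos ν − cosh z)/sin ν`. -/
private lemma auxD (E C S Sθ Cθ n : ℂ) (hn : n ≠ 0) (hCθ : Cθ ≠ 0) :
    Sθ * (E - C) + S * Cθ = Cθ * n * (Sθ / (Cθ * n) * (E - C) + S / n) := by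
  field_simp

private lemma aux1 (E C S Sθ Cθ n : ℂ) (hn : n ≠ 0) (hCθ : Cθ ≠ 0)
    (hd : Sθ / (Cθ * n) * (E - C) + S / n ≠ 0) (hD : Sθ * (E - C) + S * Cθ ≠ 0) :
    (E - C - n ^ 2 * (S / n) * (Sθ / (Cθ * n))) / (Sθ / (Cθ * n) * (E - C) + S / n)
      = n * (Cθ * (E - C) - S * Sθ) / (Sθ * (E - C) + S * Cθ) := by
  rw [div_eq_div_iff hd hD]
  field_simp

private lemma aux2 (E C S Sθ Cθ S₁ C₁ n : ℂ) (hn : n ≠ 0)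
    (hD : Sθ * (E - C) + S * Cθ ≠ 0)
    (h1 : S = S₁ * Cθ + C₁ * Sθ) (h2 : C = C₁ * Cθ - S₁ * Sθ) :
    C₁ + S₁ / n * (n * (Cθ * (E - C) - S * Sθ) / (Sθ * (E - C) + S * Cθ))
      = S * E / (Sθ * (E - C) + S * Cθ) := by
  have key : C₁ * (Sθ * (E - C) + S * Cθ) + S₁ * (Cθ * (E - C) - S * Sθ) = S * E := by
    linear_combination (-(E - C)) * h1 + (-S) * h2
  have expand : C₁ + S₁ / n * (n * (Cθ * (E - C) - S * Sθ) / (Sθ * (E - C) + S * Cθ))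
      = (C₁ * (Sθ * (E - C) + S * Cθ) + S₁ * (Cθ * (E - C) - S * Sθ))
        / (Sθ * (E - C) + S * Cθ) := by
    have hD2 : (E - C) * Sθ + Cθ * S ≠ 0 := by rwa [mul_comm, mul_comm Cθ]
    field_simp
  rw [expand, key]

private lemma auxL (E C S Sθ Cθ n : ℂ) (hn : n ≠ 0) (hS : S ≠ 0) (hE : E ≠ 0)
    (hSθ : Sθ ≠ 0) (hD : Sθ * (E - C) + S * Cθ ≠ 0) :
    (E - C - S / n * (n * (Cθ * (E - C) - S * Sθ) / (Sθ * (E - C) + S * Cθ)))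
        / (Sθ / n * (S * E / (Sθ * (E - C) + S * Cθ)))
      = n * ((E - C) ^ 2 + S ^ 2) / (S * E) := by
  have hden : Sθ / n * (S * E / (Sθ * (E - C) + S * Cθ)) ≠ 0 :=
    mul_ne_zero (div_ne_zero hSθ hn) (div_ne_zero (mul_ne_zero hS hE) hD)
  rw [div_eq_div_iff hden (mul_ne_zero hS hE)]
  have hD2 : (E - C) * Sθ + S * Cθ ≠ 0 := by rwa [mul_comm]
  field_simp
  ring

theorem Lsym_closed_form (c₁ ν : ℝ) (hsin : Real.sin ν ≠ 0)
    (hcos : Real.cos ((1 - c₁) * ν) ≠ 0) (z : ℂ)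
    (hden₁ : ((bbc c₁ ν / b1c c₁ ν : ℝ) : ℂ) * (Complex.exp z - (Real.cos ν : ℂ))
        + (rsinc ν : ℂ) ≠ 0)
    (hden₂ : ((bbc c₁ ν : ℝ) : ℂ) * L₂sym c₁ ν z ≠ 0) :
    Lsym c₁ ν z
      = -2 * (ν : ℂ) * ((Real.cos ν : ℂ) - Complex.cosh z) / (Real.sin ν : ℂ) := by
  have hν : ν ≠ 0 := fun h => hsin (by simp [h])
  -- real-valued simplifications
  have hbbc : bbc c₁ ν = Real.sin ((1 - c₁) * ν) / ν := by
    rcases eq_or_ne c₁ 1 with h | h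
    · simp [bbc, h]
    · have h1 : (1 : ℝ) - c₁ ≠ 0 := sub_ne_zero.2 fun H => h H.symm
      have hne : (1 - c₁) * ν ≠ 0 := mul_ne_zero h1 hν
      simp only [bbc, rsinc, if_neg hne]
      field_simp
  have hrsν : rsinc ν = Real.sin ν / ν := by simp [rsinc, hν]
  have hrc : c₁ * rsinc (c₁ * ν) = Real.sin (c₁ * ν) / ν := by
    rcases eq_or_ne c₁ 0 with h | h
    · simp [h]
    · have hne : c₁ * ν ≠ 0 := mul_ne_zero h hν
      simp only [rsinc, if_neg hne]
      field_simp
  have hSθr : Real.sin ((1 - c₁) * ν) ≠ 0 := by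
    intro h0
    apply hden₂
    have hb0 : bbc c₁ ν = 0 := by rw [hbbc, h0, zero_div]
    simp [hb0]
  -- complex nonvanishing facts
  have hnC : (ν : ℂ) ≠ 0 := Complex.ofReal_ne_zero.2 hν
  have hSC : ((Real.sin ν : ℝ) : ℂ) ≠ 0 := Complex.ofReal_ne_zero.2 hsin
  have hCθC : ((Real.cos ((1 - c₁) * ν) : ℝ) : ℂ) ≠ 0 := Complex.ofReal_ne_zero.2 hcos
  have hSθC : ((Real.sin ((1 - c₁) * ν) : ℝ) : ℂ) ≠ 0 := Complex.ofReal_ne_zero.2 hSθr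
  have hEC : Complex.exp z ≠ 0 := Complex.exp_ne_zero z
  -- complex cast simplifications
  have hrsνC : ((rsinc ν : ℝ) : ℂ) = (Real.sin ν : ℂ) / (ν : ℂ) := by
    rw [hrsν, Complex.ofReal_div]
  have hbbcC : ((bbc c₁ ν : ℝ) : ℂ) = (Real.sin ((1 - c₁) * ν) : ℂ) / (ν : ℂ) := by
    rw [hbbc, Complex.ofReal_div]
  have hβC : ((bbc c₁ ν / b1c c₁ ν : ℝ) : ℂ)
      = (Real.sin ((1 - c₁) * ν) : ℂ) / ((Real.cos ((1 - c₁) * ν) : ℂ) * (ν : ℂ)) := by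
    rw [show bbc c₁ ν / b1c c₁ ν
        = Real.sin ((1 - c₁) * ν) / (Real.cos ((1 - c₁) * ν) * ν) by
      rw [hbbc, b1c]; ring]
    rw [Complex.ofReal_div, Complex.ofReal_mul]
  have hrcC : ((c₁ * rsinc (c₁ * ν) : ℝ) : ℂ) = (Real.sin (c₁ * ν) : ℂ) / (ν : ℂ) := by
    rw [hrc, Complex.ofReal_div]
  -- trig addition formulas (cast to ℂ)
  have hsum : c₁ * ν + (1 - c₁) * ν = ν := by ring
  have hSsum : ((Real.sin ν : ℝ) : ℂ)
      = (Real.sin (c₁ * ν) : ℂ) * (Real.cos ((1 - c₁) * ν) : ℂ)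
        + (Real.cos (c₁ * ν) : ℂ) * (Real.sin ((1 - c₁) * ν) : ℂ) := by
    rw [show Real.sin ν = Real.sin (c₁ * ν) * Real.cos ((1 - c₁) * ν)
        + Real.cos (c₁ * ν) * Real.sin ((1 - c₁) * ν) by rw [← Real.sin_add, hsum]]
    rw [Complex.ofReal_add, Complex.ofReal_mul, Complex.ofReal_mul]
  have hCsum : ((Real.cos ν : ℝ) : ℂ)
      = (Real.cos (c₁ * ν) : ℂ) * (Real.cos ((1 - c₁) * ν) : ℂ)
        - (Real.sin (c₁ * ν) : ℂ) * (Real.sin ((1 - c₁) * ν) : ℂ) := by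
    rw [show Real.cos ν = Real.cos (c₁ * ν) * Real.cos ((1 - c₁) * ν)
        - Real.sin (c₁ * ν) * Real.sin ((1 - c₁) * ν) by rw [← Real.cos_add, hsum]]
    rw [Complex.ofReal_sub, Complex.ofReal_mul, Complex.ofReal_mul]
  have hpythC : ((Real.sin ν : ℝ) : ℂ) ^ 2 + ((Real.cos ν : ℝ) : ℂ) ^ 2 = 1 := by
    rw [← Complex.ofReal_pow, ← Complex.ofReal_pow, ← Complex.ofReal_add,
      Real.sin_sq_add_cos_sq, Complex.ofReal_one]
  have hcosh : Complex.exp z * (2 * Complex.cosh z) = Complex.exp z ^ 2 + 1 := by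
    rw [Complex.two_cosh, Complex.exp_neg]
    field_simp
  -- the cleared denominator of L₁
  have hD' : (Real.sin ((1 - c₁) * ν) : ℂ) * (Complex.exp z - (Real.cos ν : ℂ))
      + (Real.sin ν : ℂ) * (Real.cos ((1 - c₁) * ν) : ℂ) ≠ 0 := by
    have hden₁' := hden₁
    rw [hβC, hrsνC] at hden₁'
    rw [auxD (Complex.exp z) (Real.cos ν : ℂ) (Real.sin ν : ℂ)
      (Real.sin ((1 - c₁) * ν) : ℂ) (Real.cos ((1 - c₁) * ν) : ℂ) (ν : ℂ) hnC hCθC]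
    exact mul_ne_zero (mul_ne_zero hCθC hnC) hden₁'
  -- closed form of L₁
  have hL1 : L₁sym c₁ ν z
      = (ν : ℂ) * ((Real.cos ((1 - c₁) * ν) : ℂ) * (Complex.exp z - (Real.cos ν : ℂ))
          - (Real.sin ν : ℂ) * (Real.sin ((1 - c₁) * ν) : ℂ))
        / ((Real.sin ((1 - c₁) * ν) : ℂ) * (Complex.exp z - (Real.cos ν : ℂ))
          + (Real.sin ν : ℂ) * (Real.cos ((1 - c₁) * ν) : ℂ)) := by
    have hden₁' := hden₁
    rw [hβC, hrsνC] at hden₁'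
    simp only [L₁sym]
    rw [hβC, hrsνC]
    exact aux1 _ _ _ _ _ _ hnC hCθC hden₁' hD'
  -- closed form of L₂
  have hL2 : L₂sym c₁ ν z
      = (Real.sin ν : ℂ) * Complex.exp z
        / ((Real.sin ((1 - c₁) * ν) : ℂ) * (Complex.exp z - (Real.cos ν : ℂ))
          + (Real.sin ν : ℂ) * (Real.cos ((1 - c₁) * ν) : ℂ)) := by
    simp only [L₂sym]
    rw [hrcC, hL1]
    exact aux2 _ _ _ _ _ _ _ _ hnC hD' hSsum hCsum
  -- closed form of L
  have hL : Lsym c₁ ν z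
      = (ν : ℂ) * ((Complex.exp z - (Real.cos ν : ℂ)) ^ 2 + ((Real.sin ν : ℝ) : ℂ) ^ 2)
        / (((Real.sin ν : ℝ) : ℂ) * Complex.exp z) := by
    simp only [Lsym]
    rw [hrsνC, hbbcC, hL1, hL2]
    exact auxL _ _ _ _ _ _ hnC hSC hEC hSθC hD'
  rw [hL, div_eq_div_iff (mul_ne_zero hSC hEC) hSC]
  linear_combination (((Real.sin ν : ℝ) : ℂ) * (ν : ℂ)) * hpythC
    - (((Real.sin ν : ℝ) : ℂ) * (ν : ℂ)) * hcosh
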